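/- Let α, β be complex numbers with |α| > 1 and |β| > 1, and for each integer v ≥ 1 set c_v = 1/((1 − α^v)(1 − β^v)). Then the double infinite product ∏_{n≥1, m≥1} (1 − α^{−n} β^{−m} t)^{−1} converges term by term in ℂ[[t]] and its limit equals exp(∑_{v≥1} c_v t^v / v). -/

import Mathlib

open Filter PowerSeries

/-- The formal exponential `exp h = ∑_{m ≥ 0} h^m / m!` of a power series `h` with zero
constant term. -/
noncomputable def pexp (h : PowerSeries ℂ) : PowerSeries ℂ :=
  PowerSeries.mk fun k =>
    ∑ m ∈ Finset.range (k + 1), ((Nat.factorial m : ℂ))⁻¹ * PowerSeries.coeff k (h ^ m)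

/-! ### Auxiliary material -/

/-- The geometric series `∑ x^k t^k = (1 - x t)⁻¹`. -/
noncomputable def geom (x : ℂ) : PowerSeries ℂ := PowerSeries.mk fun k => x ^ k

lemma one_sub_mul_geom (x : ℂ) : (1 - PowerSeries.C x * PowerSeries.X) * geom x = 1 := by
  ext k
  rw [sub_mul, one_mul, mul_assoc, map_sub]
  cases k with
  | zero => simp [geom, PowerSeries.coeff_zero_eq_constantCoeff]
  | succ n => simp [geom, PowerSeries.coeff_succ_X_mul, pow_succ, mul_comm]

lemma inv_one_sub (x : ℂ) : (1 - PowerSeries.C x * PowerSeries.X)⁻¹ = geom x := by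
  rw [PowerSeries.inv_eq_iff_mul_eq_one, mul_comm, one_sub_mul_geom]
  simp

lemma geom_mul_geom (x : ℂ) :
    geom x * geom x = PowerSeries.mk fun k => ((k : ℂ) + 1) * x ^ k := by
  ext k
  rw [PowerSeries.coeff_mul, PowerSeries.coeff_mk]
  have : ∀ p ∈ Finset.HasAntidiagonal.antidiagonal k,
      (PowerSeries.coeff p.1 (geom x)) * PowerSeries.coeff p.2 (geom x) = x ^ k := by
    intro p hp
    rw [Finset.HasAntidiagonal.mem_antidiagonal] at hp
    simp [geom, ← pow_add, hp]
  rw [Finset.sum_congr rfl this, Finset.sum_const, Finset.Nat.card_antidiagonal]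
  push_cast
  ring

lemma constantCoeff_geom (x : ℂ) : PowerSeries.constantCoeff (geom x) = 1 := by
  simp [geom, ← PowerSeries.coeff_zero_eq_constantCoeff]

lemma derivative_geom (x : ℂ) :
    d⁄dX ℂ (geom x) = PowerSeries.C x * geom x * geom x := by
  rw [mul_assoc, geom_mul_geom]
  ext k
  simp [PowerSeries.coeff_derivative, geom, pow_succ]
  ring

/-- The series `∑_{v ≥ 1} (∑_{p ∈ S} x_p^v) t^v / v`. -/
noncomputable def hser {ι : Type*} (S : Finset ι) (x : ι → ℂ) : PowerSeries ℂ :=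
  PowerSeries.mk fun v => if v = 0 then 0 else (∑ p ∈ S, x p ^ v) / v

lemma constantCoeff_hser {ι : Type*} (S : Finset ι) (x : ι → ℂ) :
    PowerSeries.constantCoeff (hser S x) = 0 := by
  simp [hser, ← PowerSeries.coeff_zero_eq_constantCoeff]

lemma derivative_hser {ι : Type*} (S : Finset ι) (x : ι → ℂ) :
    d⁄dX ℂ (hser S x) = ∑ p ∈ S, PowerSeries.C (x p) * geom (x p) := by
  ext k
  rw [PowerSeries.coeff_derivative, hser, PowerSeries.coeff_mk, if_neg (Nat.succ_ne_zero k)]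
  rw [map_sum]
  push_cast
  rw [div_mul_cancel₀ _ (Nat.cast_add_one_ne_zero k)]
  refine Finset.sum_congr rfl fun p _ => ?_
  simp [geom, pow_succ, mul_comm]

lemma coeff_pow_eq_zero {h : PowerSeries ℂ} (h0 : PowerSeries.constantCoeff h = 0)
    {k m : ℕ} (hkm : k < m) : PowerSeries.coeff k (h ^ m) = 0 := by
  obtain ⟨g, rfl⟩ := PowerSeries.X_dvd_iff.mpr h0
  rw [mul_pow, PowerSeries.coeff_mul]
  refine Finset.sum_eq_zero fun p hp => ?_
  rw [Finset.HasAntidiagonal.mem_antidiagonal] at hp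
  rw [PowerSeries.coeff_X_pow, if_neg (by omega), zero_mul]

lemma coeff_pexp_trunc {h : PowerSeries ℂ} (h0 : PowerSeries.constantCoeff h = 0)
    {i k : ℕ} (hik : i ≤ k) :
    PowerSeries.coeff i (pexp h) =
      PowerSeries.coeff i (∑ j ∈ Finset.range (k + 1),
        PowerSeries.C ((Nat.factorial j : ℂ))⁻¹ * h ^ j) := by
  rw [pexp, PowerSeries.coeff_mk, map_sum]
  rw [← Finset.sum_subset (Finset.range_subset_range.2 (by omega) :
      Finset.range (i+1) ⊆ Finset.range (k+1))]
  · exact Finset.sum_congr rfl fun j _ => by rw [PowerSeries.coeff_C_mul]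
  · intro j hj hj2
    rw [Finset.mem_range] at hj hj2
    rw [PowerSeries.coeff_C_mul, coeff_pow_eq_zero h0 (by omega), mul_zero]

lemma constantCoeff_pexp (h : PowerSeries ℂ) :
    PowerSeries.constantCoeff (pexp h) = 1 := by
  rw [← PowerSeries.coeff_zero_eq_constantCoeff_apply, pexp, PowerSeries.coeff_mk]
  simp

lemma derivative_pexp {h : PowerSeries ℂ} (h0 : PowerSeries.constantCoeff h = 0) :
    d⁄dX ℂ (pexp h) = d⁄dX ℂ h * pexp h := by
  ext k
  have hR : PowerSeries.coeff k (d⁄dX ℂ h * pexp h) =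
      ∑ j ∈ Finset.range (k + 1),
        ((Nat.factorial j : ℂ))⁻¹ * PowerSeries.coeff k (d⁄dX ℂ h * h ^ j) := by
    calc PowerSeries.coeff k (d⁄dX ℂ h * pexp h)
        = PowerSeries.coeff k (d⁄dX ℂ h * ∑ j ∈ Finset.range (k + 1),
            PowerSeries.C ((Nat.factorial j : ℂ))⁻¹ * h ^ j) := by
          rw [PowerSeries.coeff_mul, PowerSeries.coeff_mul]
          refine Finset.sum_congr rfl fun p hp => ?_
          rw [Finset.HasAntidiagonal.mem_antidiagonal] at hp
          rw [coeff_pexp_trunc h0 (show p.2 ≤ k by omega)]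
      _ = _ := by
          rw [Finset.mul_sum, map_sum]
          refine Finset.sum_congr rfl fun j _ => ?_
          rw [mul_comm (d⁄dX ℂ h), mul_assoc, PowerSeries.coeff_C_mul, mul_comm (d⁄dX ℂ h)]
  rw [hR, PowerSeries.coeff_derivative, pexp, PowerSeries.coeff_mk, Finset.sum_mul]
  rw [Finset.sum_range_succ']
  rw [show ((Nat.factorial 0 : ℂ))⁻¹ * PowerSeries.coeff (k+1) (h ^ 0) * ((k:ℂ)+1) = 0 by
    simp [PowerSeries.coeff_one], add_zero]
  refine Finset.sum_congr rfl fun j _ => ?_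
  have hd : PowerSeries.coeff (k + 1) (h ^ (j + 1)) * ((k : ℂ) + 1)
      = ((j : ℂ) + 1) * PowerSeries.coeff k (h ^ j * d⁄dX ℂ h) := by
    calc PowerSeries.coeff (k + 1) (h ^ (j + 1)) * ((k : ℂ) + 1)
        = PowerSeries.coeff k (d⁄dX ℂ (h ^ (j+1))) := (PowerSeries.coeff_derivative _ _).symm
      _ = _ := by
          rw [Derivation.leibniz_pow, Nat.add_sub_cancel, nsmul_eq_mul, smul_eq_mul,
            ← map_natCast PowerSeries.C (j+1), PowerSeries.coeff_C_mul]
          push_cast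
          ring
  rw [mul_assoc, hd, Nat.factorial_succ, mul_comm (d⁄dX ℂ h)]
  push_cast
  rw [mul_inv]
  have h1 : ((j:ℂ)+1) ≠ 0 := Nat.cast_add_one_ne_zero j
  have h2 : ((Nat.factorial j : ℂ)) ≠ 0 := Nat.cast_ne_zero.2 (Nat.factorial_ne_zero j)
  field_simp

lemma ode_unique (a f g : PowerSeries ℂ) (hf : d⁄dX ℂ f = a * f) (hg : d⁄dX ℂ g = a * g)
    (h0 : PowerSeries.constantCoeff f = PowerSeries.constantCoeff g) : f = g := by
  ext k
  induction k using Nat.strong_induction_on with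
  | _ k ih =>
    cases k with
    | zero => simpa [PowerSeries.coeff_zero_eq_constantCoeff] using h0
    | succ n =>
      have hkf := PowerSeries.coeff_derivative f n
      have hkg := PowerSeries.coeff_derivative g n
      rw [hf] at hkf
      rw [hg] at hkg
      have hne : ((n : ℂ) + 1) ≠ 0 := Nat.cast_add_one_ne_zero n
      have key : PowerSeries.coeff (n+1) f * ((n:ℂ)+1)
          = PowerSeries.coeff (n+1) g * ((n:ℂ)+1) := by
        rw [← hkf, ← hkg, PowerSeries.coeff_mul, PowerSeries.coeff_mul]
        refine Finset.sum_congr rfl fun p hp => ?_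
        rw [Finset.HasAntidiagonal.mem_antidiagonal] at hp
        rw [ih p.2 (by omega)]
      exact mul_right_cancel₀ hne key

lemma derivative_prod_geom {ι : Type*} [DecidableEq ι] (S : Finset ι) (x : ι → ℂ) :
    d⁄dX ℂ (∏ p ∈ S, geom (x p)) =
      (∑ p ∈ S, PowerSeries.C (x p) * geom (x p)) * ∏ p ∈ S, geom (x p) := by
  induction S using Finset.induction_on with
  | empty => simp
  | insert q T hp ih =>
    rw [Finset.prod_insert hp, Finset.sum_insert hp, Derivation.leibniz, smul_eq_mul,
      smul_eq_mul, ih, derivative_geom]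
    ring

/-- The exp–log identity for a finite product of geometric series. -/
lemma prod_geom_eq_pexp {ι : Type*} [DecidableEq ι] (S : Finset ι) (x : ι → ℂ) :
    ∏ p ∈ S, geom (x p) = pexp (hser S x) := by
  apply ode_unique (∑ p ∈ S, PowerSeries.C (x p) * geom (x p))
  · exact derivative_prod_geom S x
  · rw [derivative_pexp (constantCoeff_hser S x), derivative_hser]
  · rw [constantCoeff_pexp, map_prod]
    simp [constantCoeff_geom]

/-- Term-by-term (coefficientwise) convergence of a sequence of power series. -/
def TCoef (F : ℕ → PowerSeries ℂ) (f : PowerSeries ℂ) : Prop :=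
  ∀ k, Tendsto (fun N => PowerSeries.coeff k (F N)) atTop (nhds (PowerSeries.coeff k f))

lemma TCoef.mul' {F G : ℕ → PowerSeries ℂ} {f g : PowerSeries ℂ} (hF : TCoef F f)
    (hG : TCoef G g) : TCoef (fun N => F N * G N) (f * g) := by
  intro k
  simp only [PowerSeries.coeff_mul]
  exact tendsto_finset_sum _ fun p _ => (hF p.1).mul (hG p.2)

lemma TCoef.pow {F : ℕ → PowerSeries ℂ} {f : PowerSeries ℂ} (hF : TCoef F f) (m : ℕ) :
    TCoef (fun N => F N ^ m) (f ^ m) := by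
  induction m with
  | zero => simpa [TCoef] using fun k => tendsto_const_nhds
  | succ n ih => simpa [pow_succ] using ih.mul' hF

lemma TCoef.pexp {F : ℕ → PowerSeries ℂ} {f : PowerSeries ℂ} (hF : TCoef F f) :
    TCoef (fun N => _root_.pexp (F N)) (_root_.pexp f) := by
  intro k
  have e1 : (fun N => PowerSeries.coeff k (_root_.pexp (F N)))
      = fun N => ∑ m ∈ Finset.range (k+1),
          ((Nat.factorial m : ℂ))⁻¹ * PowerSeries.coeff k (F N ^ m) := by
    funext N
    rw [_root_.pexp, PowerSeries.coeff_mk]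
  rw [e1, _root_.pexp, PowerSeries.coeff_mk]
  exact tendsto_finset_sum _ fun m _ => tendsto_const_nhds.mul (hF.pow m k)

lemma sum_Icc_geom_tendsto {a : ℂ} (ha : ‖a‖ < 1) :
    Tendsto (fun N : ℕ => ∑ n ∈ Finset.Icc 1 N, a ^ n) atTop (nhds (a * (1 - a)⁻¹)) := by
  have e : ∀ N : ℕ, ∑ n ∈ Finset.Icc 1 N, a ^ n = a * ∑ i ∈ Finset.range N, a ^ i := by
    intro N
    rw [← Finset.Ico_add_one_right_eq_Icc, Finset.sum_Ico_eq_sum_range, Nat.add_sub_cancel, Finset.mul_sum]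
    exact Finset.sum_congr rfl fun i _ => by rw [pow_add, pow_one]
  simp only [e]
  exact tendsto_const_nhds.mul (hasSum_geometric_of_norm_lt_one ha).tendsto_sum_nat

lemma inv_geom_val {c : ℂ} (hc : 1 < ‖c‖) : c⁻¹ * (1 - c⁻¹)⁻¹ = -(1 - c)⁻¹ := by
  have hc0 : c ≠ 0 := by
    intro h
    simp [h] at hc
    linarith
  have hc1 : c ≠ 1 := by
    intro h
    simp [h] at hc
  have h2 : (1 : ℂ) - c ≠ 0 := sub_ne_zero.2 (Ne.symm hc1)
  have h1 : (1 : ℂ) - c⁻¹ ≠ 0 := by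
    rw [sub_ne_zero]
    intro h
    exact hc1 (by field_simp at h; rw [h])
  have h4 : ((-1 : ℂ) + c) ≠ 0 := fun h => h2 (by linear_combination -h)
  field_simp
  rw [show (1:ℂ) - c = -(c-1) by ring]

/-- Let `α, β ∈ ℂ` with `|α| > 1`, `|β| > 1`, and `c_v = 1 / ((1 - α^v)(1 - β^v))`.
Then the double infinite product `∏_{n,m ≥ 1} (1 - α^{-n} β^{-m} t)⁻¹` converges term by
term in `ℂ[[t]]` to `exp (∑_{v ≥ 1} c_v t^v / v)` (the zeta function `Z(BE, t)`). -/
theorem zeta_BE_product (α β : ℂ) (hα : 1 < ‖α‖) (hβ : 1 < ‖β‖) :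
    ∀ k : ℕ,
      Tendsto
        (fun N : ℕ => PowerSeries.coeff k
          (∏ p ∈ Finset.Icc 1 N ×ˢ Finset.Icc 1 N,
            (1 - PowerSeries.C ((α ^ p.1)⁻¹ * (β ^ p.2)⁻¹) * PowerSeries.X)⁻¹))
        atTop
        (nhds (PowerSeries.coeff k (pexp (PowerSeries.mk fun v =>
          if v = 0 then 0 else (1 / ((1 - α ^ v) * (1 - β ^ v))) / v)))) := by
  have hαn : ∀ v : ℕ, v ≠ 0 → ‖(α ^ v)⁻¹‖ < 1 := fun v hv => by
    rw [norm_inv, norm_pow]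
    exact inv_lt_one_of_one_lt₀ (one_lt_pow₀ hα hv)
  have hβn : ∀ v : ℕ, v ≠ 0 → ‖(β ^ v)⁻¹‖ < 1 := fun v hv => by
    rw [norm_inv, norm_pow]
    exact inv_lt_one_of_one_lt₀ (one_lt_pow₀ hβ hv)
  have key : ∀ N : ℕ, (∏ p ∈ Finset.Icc 1 N ×ˢ Finset.Icc 1 N,
      (1 - PowerSeries.C ((α ^ p.1)⁻¹ * (β ^ p.2)⁻¹) * PowerSeries.X)⁻¹)
      = pexp (hser (Finset.Icc 1 N ×ˢ Finset.Icc 1 N)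
          (fun p : ℕ × ℕ => (α ^ p.1)⁻¹ * (β ^ p.2)⁻¹)) := by
    intro N
    rw [← prod_geom_eq_pexp]
    exact Finset.prod_congr rfl fun p _ => inv_one_sub _
  have hTC : TCoef (fun N => hser (Finset.Icc 1 N ×ˢ Finset.Icc 1 N)
      (fun p : ℕ × ℕ => (α ^ p.1)⁻¹ * (β ^ p.2)⁻¹))
      (PowerSeries.mk fun v => if v = 0 then 0 else (1 / ((1 - α ^ v) * (1 - β ^ v))) / v) := by
    intro v
    simp only [hser, PowerSeries.coeff_mk]
    by_cases hv : v = 0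
    · simp [hv]
    · simp only [if_neg hv]
      apply Tendsto.div_const
      have e : ∀ N : ℕ, ∑ p ∈ Finset.Icc 1 N ×ˢ Finset.Icc 1 N,
          ((α ^ p.1)⁻¹ * (β ^ p.2)⁻¹) ^ v
          = (∑ n ∈ Finset.Icc 1 N, ((α ^ v)⁻¹) ^ n) *
            (∑ m ∈ Finset.Icc 1 N, ((β ^ v)⁻¹) ^ m) := by
        intro N
        rw [Finset.sum_product, Finset.sum_mul_sum]
        refine Finset.sum_congr rfl fun n _ => Finset.sum_congr rfl fun m _ => ?_
        have e1 : ∀ (c : ℂ) (n : ℕ), ((c ^ n)⁻¹) ^ v = ((c ^ v)⁻¹) ^ n := by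
          intro c n
          rw [← inv_pow, ← inv_pow, ← pow_mul, ← pow_mul, mul_comm]
        rw [mul_pow, e1, e1]
      simp only [e]
      have hA : 1 < ‖α ^ v‖ := by
        rw [norm_pow]
        exact one_lt_pow₀ hα hv
      have hB : 1 < ‖β ^ v‖ := by
        rw [norm_pow]
        exact one_lt_pow₀ hβ hv
      have hval : (1:ℂ) / ((1 - α ^ v) * (1 - β ^ v))
          = ((α ^ v)⁻¹ * (1 - (α ^ v)⁻¹)⁻¹) * ((β ^ v)⁻¹ * (1 - (β ^ v)⁻¹)⁻¹) := by
        rw [inv_geom_val hA, inv_geom_val hB, neg_mul_neg, one_div, mul_inv]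
      rw [hval]
      exact (sum_Icc_geom_tendsto (hαn v hv)).mul (sum_Icc_geom_tendsto (hβn v hv))
  intro k
  simp only [key]
  exact TCoef.pexp hTC k
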